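/- arXiv:1512.00311 — 9 statements merged into one kernel-verified Lean document; each statement's English description precedes it below -/
import Mathlib

section
/- If A is a real skew-symmetric n×n matrix and b ∈ ℝⁿ, then the Krylov subspaces K_s(A², Ab) = span{Ab, A³b, ..., A^{2s-1}b} and K_t(A², b) = span{b, A²b, ..., A^{2t-2}b} are orthogonal subspaces of ℝⁿ, for any s, t ≥ 0. -/
open Matrix

def krylov {n : ℕ} (M : Matrix (Fin n) (Fin n) ℝ) (v : Fin n → ℝ) (m : ℕ) :
    Submodule ℝ (Fin n → ℝ) :=
  Submodule.span ℝ ((fun k => (M ^ k) *ᵥ v) '' Set.Iio m)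

noncomputable def enorm {n : ℕ} (v : Fin n → ℝ) : ℝ := Real.sqrt (∑ i, v i ^ 2)

lemma skew_move {n : ℕ} {A : Matrix (Fin n) (Fin n) ℝ} (hA : Aᵀ = -A)
    (x y : Fin n → ℝ) : (A *ᵥ x) ⬝ᵥ y = -(x ⬝ᵥ (A *ᵥ y)) := by
  rw [dotProduct_comm, Matrix.dotProduct_mulVec, ← Matrix.mulVec_transpose, hA,
    Matrix.neg_mulVec, neg_dotProduct, dotProduct_comm]

lemma skew_pow_move {n : ℕ} {A : Matrix (Fin n) (Fin n) ℝ} (hA : Aᵀ = -A)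
    (m : ℕ) (x y : Fin n → ℝ) :
    (A ^ m *ᵥ x) ⬝ᵥ y = (-1 : ℝ) ^ m * (x ⬝ᵥ (A ^ m *ᵥ y)) := by
  induction m generalizing x y with
  | zero => simp
  | succ m ih =>
    rw [pow_succ, ← Matrix.mulVec_mulVec, ih, skew_move hA,
      Matrix.mulVec_mulVec, ← pow_succ', pow_succ]
    ring

lemma core_orth {n : ℕ} {A : Matrix (Fin n) (Fin n) ℝ} (hA : Aᵀ = -A)
    (b : Fin n → ℝ) (k j : ℕ) :
    ((A ^ 2) ^ k *ᵥ (A *ᵥ b)) ⬝ᵥ ((A ^ 2) ^ j *ᵥ b) = 0 := by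
  have h1 : (A ^ 2) ^ k *ᵥ (A *ᵥ b) = A ^ (2 * k + 1) *ᵥ b := by
    rw [← pow_mul, Matrix.mulVec_mulVec, ← pow_succ]
  have h2 : (A ^ 2) ^ j *ᵥ b = A ^ (2 * j) *ᵥ b := by rw [← pow_mul]
  rw [h1, h2]
  have T1 := skew_pow_move hA (2 * k + 1) b (A ^ (2 * j) *ᵥ b)
  have T2 := skew_pow_move hA (2 * j) b (A ^ (2 * k + 1) *ᵥ b)
  rw [Matrix.mulVec_mulVec, ← pow_add] at T1 T2
  rw [dotProduct_comm] at T2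
  have e1 : (-1 : ℝ) ^ (2 * k + 1) = -1 := by
    rw [pow_succ, pow_mul]; norm_num
  have e2 : (-1 : ℝ) ^ (2 * j) = 1 := by rw [pow_mul]; norm_num
  rw [e1] at T1; rw [e2] at T2
  have hcomm : 2 * k + 1 + 2 * j = 2 * j + (2 * k + 1) := by ring
  rw [hcomm] at T1
  linarith [T1, T2]

theorem krylov_odd_even_orthogonal {n : ℕ} (A : Matrix (Fin n) (Fin n) ℝ)
    (hA : Aᵀ = -A) (b : Fin n → ℝ) (s t : ℕ) :
    ∀ u ∈ krylov (A ^ 2) (A *ᵥ b) s, ∀ v ∈ krylov (A ^ 2) b t, u ⬝ᵥ v = 0 := by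
  intro u hu
  refine Submodule.span_induction ?_ ?_ ?_ ?_ hu
  · rintro x ⟨k, _, rfl⟩ v hv
    refine Submodule.span_induction ?_ ?_ ?_ ?_ hv
    · rintro y ⟨j, _, rfl⟩
      exact core_orth hA b k j
    · simp
    · intro y z _ _ hy hz
      rw [dotProduct_add, hy, hz, add_zero]
    · intro c y _ hy
      rw [dotProduct_smul, hy, smul_zero]
  · intro v _; simp
  · intro x y _ _ hx hy v hv
    rw [add_dotProduct, hx v hv, hy v hv, add_zero]
  · intro c x _ hx v hv
    rw [smul_dotProduct, hx v hv, smul_zero]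
end

section
/- If A is a real skew-symmetric nonsingular n×n matrix and x solves Ax = b, then x is orthogonal to the Krylov subspace K_t(A², b) = span{b, A²b, ..., A^{2t-2}b} for any t ≥ 0. -/
open Matrix

theorem solution_orthogonal_even_krylov {n : ℕ} (A : Matrix (Fin n) (Fin n) ℝ)
    (hA : Aᵀ = -A) (hdet : A.det ≠ 0) (b x : Fin n → ℝ) (hx : A *ᵥ x = b) (t : ℕ) :
    ∀ v ∈ krylov (A ^ 2) b t, x ⬝ᵥ v = 0 := by
  intro v hv
  induction hv using Submodule.span_induction with
  | mem w hw =>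
    obtain ⟨k, -, rfl⟩ := hw
    have hgen : (A ^ 2) ^ k *ᵥ b = (A ^ (2 * k + 1)) *ᵥ x := by
      rw [← hx, mulVec_mulVec, ← pow_mul, ← pow_succ]
    show x ⬝ᵥ (A ^ 2) ^ k *ᵥ b = 0
    rw [hgen]
    have hskew : (A ^ (2 * k + 1))ᵀ = -(A ^ (2 * k + 1)) := by
      rw [transpose_pow, hA, Odd.neg_pow ⟨k, by ring⟩]
    have h1 : x ⬝ᵥ (A ^ (2 * k + 1)) *ᵥ x = ((A ^ (2 * k + 1))ᵀ *ᵥ x) ⬝ᵥ x := by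
      rw [dotProduct_mulVec, mulVec_transpose]
    rw [hskew, neg_mulVec, neg_dotProduct, dotProduct_comm (A ^ (2 * k + 1) *ᵥ x)] at h1
    linarith
  | zero => simp
  | add y z _ _ hy hz => rw [dotProduct_add, hy, hz, add_zero]
  | smul c y _ hy => rw [dotProduct_smul, hy, smul_zero]
end

section
/- If A is real skew-symmetric and x^E ∈ K_q(A², Ab) satisfies pᵀ(b - Ax^E) = 0 for all p ∈ K_q(A², b), then in fact pᵀ(b - Ax^E) = 0 for all p in the larger Krylov subspace K_{2q}(A, b). That is, the CGNE iterate satisfies the Galerkin condition on K_{2q}(A, b). -/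
open Matrix

lemma skew_odd_quad {n : ℕ} (A : Matrix (Fin n) (Fin n) ℝ)
    (hA : Aᵀ = -A) (b : Fin n → ℝ) {m : ℕ} (hm : Odd m) :
    b ⬝ᵥ ((A ^ m) *ᵥ b) = 0 := by
  have hT : (A ^ m)ᵀ = -(A ^ m) := by
    rw [Matrix.transpose_pow, hA, hm.neg_pow]
  have h : b ⬝ᵥ ((A ^ m) *ᵥ b) = ((A ^ m)ᵀ *ᵥ b) ⬝ᵥ b := by
    rw [Matrix.dotProduct_mulVec, Matrix.mulVec_transpose]
  rw [hT] at h
  have hc : ((A ^ m) *ᵥ b) ⬝ᵥ b = b ⬝ᵥ ((A ^ m) *ᵥ b) := dotProduct_comm _ _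
  rw [Matrix.neg_mulVec, neg_dotProduct, hc] at h
  linarith

lemma skew_odd_dot {n : ℕ} (A : Matrix (Fin n) (Fin n) ℝ)
    (hA : Aᵀ = -A) (b : Fin n → ℝ) {i j : ℕ} (hij : Odd (i + j)) :
    ((A ^ i) *ᵥ b) ⬝ᵥ ((A ^ j) *ᵥ b) = 0 := by
  have h : ((A ^ i) *ᵥ b) ⬝ᵥ ((A ^ j) *ᵥ b)
      = b ⬝ᵥ (((A ^ i)ᵀ * A ^ j) *ᵥ b) := by
    rw [Matrix.dotProduct_mulVec, Matrix.dotProduct_mulVec, ← Matrix.vecMul_vecMul]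
    congr 1
    rw [Matrix.vecMul_transpose]
  rw [h, Matrix.transpose_pow, hA]
  rcases Nat.even_or_odd i with hi | hi
  · rw [hi.neg_pow, ← pow_add]
    exact skew_odd_quad A hA b hij
  · rw [hi.neg_pow, Matrix.neg_mul, Matrix.neg_mulVec, dotProduct_neg, ← pow_add,
      skew_odd_quad A hA b hij, neg_zero]

lemma krylov_odd_orth {n : ℕ} (A : Matrix (Fin n) (Fin n) ℝ)
    (hA : Aᵀ = -A) (b : Fin n → ℝ) (q m : ℕ)
    {x : Fin n → ℝ} (hx : x ∈ krylov (A ^ 2) (A *ᵥ b) q) :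
    ((A ^ (2 * m)) *ᵥ b) ⬝ᵥ x = 0 := by
  induction hx using Submodule.span_induction with
  | mem p hp =>
    obtain ⟨i, hi, rfl⟩ := hp
    show ((A ^ (2 * m)) *ᵥ b) ⬝ᵥ (((A ^ 2) ^ i) *ᵥ (A *ᵥ b)) = 0
    have h : ((A ^ 2) ^ i) *ᵥ (A *ᵥ b) = (A ^ (2 * i + 1)) *ᵥ b := by
      rw [Matrix.mulVec_mulVec, ← pow_mul, ← pow_succ]
    rw [h]
    exact skew_odd_dot A hA b ⟨m + i, by omega⟩
  | zero => simp
  | add x y _ _ hx hy => rw [dotProduct_add, hx, hy, add_zero]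
  | smul c x _ hx => rw [dotProduct_smul, hx, smul_zero]

theorem cgne_galerkin_extends {n : ℕ} (A : Matrix (Fin n) (Fin n) ℝ)
    (hA : Aᵀ = -A) (b xE : Fin n → ℝ) (q : ℕ)
    (hxE : xE ∈ krylov (A ^ 2) (A *ᵥ b) q)
    (horth : ∀ p ∈ krylov (A ^ 2) b q, p ⬝ᵥ (b - A *ᵥ xE) = 0) :
    ∀ p ∈ krylov A b (2 * q), p ⬝ᵥ (b - A *ᵥ xE) = 0 := by
  intro p hp
  induction hp using Submodule.span_induction with
  | mem p hp =>
    obtain ⟨k, hk, rfl⟩ := hp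
    simp only [Set.mem_Iio] at hk
    show (A ^ k *ᵥ b) ⬝ᵥ (b - A *ᵥ xE) = 0
    rcases Nat.even_or_odd k with ⟨j, hj⟩ | ⟨j, hj⟩
    · -- even case: A^(2j) b ∈ krylov (A^2) b q
      apply horth
      have hk2 : k = 2 * j := by omega
      rw [hk2, pow_mul]
      exact Submodule.subset_span ⟨j, Set.mem_Iio.2 (by omega), rfl⟩
    · -- odd case: k = 2j+1
      have hsplit : (A ^ k *ᵥ b) ⬝ᵥ (b - A *ᵥ xE)
          = (A ^ k *ᵥ b) ⬝ᵥ b - (A ^ k *ᵥ b) ⬝ᵥ (A *ᵥ xE) := by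
        rw [dotProduct_sub]
      have h1 : (A ^ k *ᵥ b) ⬝ᵥ b = 0 := by
        have := skew_odd_dot A hA b (i := k) (j := 0) ⟨j, by omega⟩
        simpa using this
      have h2 : (A ^ k *ᵥ b) ⬝ᵥ (A *ᵥ xE) = 0 := by
        have hrw : (A ^ k *ᵥ b) ⬝ᵥ (A *ᵥ xE) = (Aᵀ *ᵥ (A ^ k *ᵥ b)) ⬝ᵥ xE := by
          rw [Matrix.dotProduct_mulVec, Matrix.mulVec_transpose]
        rw [hA, Matrix.neg_mulVec, neg_dotProduct, Matrix.mulVec_mulVec,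
          ← pow_succ'] at hrw
        rw [hrw]
        have hk1 : k + 1 = 2 * (j + 1) := by omega
        rw [hk1, krylov_odd_orth A hA b q (j + 1) hxE, neg_zero]
      rw [hsplit, h1, h2, sub_zero]
  | zero => simp
  | add x y _ _ hx hy => rw [add_dotProduct, hx, hy, add_zero]
  | smul c x _ hx => rw [smul_dotProduct, hx, smul_zero]
end

section
/- If A is real skew-symmetric, b ∈ ℝⁿ, and x^E ∈ K_q(A², Ab), then the residual b - Ax^E lies in K_{q+1}(A², b), and hence is orthogonal to K_q(A², Ab). -/
open Matrix

lemma skew_pow_odd {n : ℕ} (A : Matrix (Fin n) (Fin n) ℝ) (hA : Aᵀ = -A) (m : ℕ)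
    (hm : Odd m) (b : Fin n → ℝ) : b ⬝ᵥ ((A ^ m) *ᵥ b) = 0 := by
  have ht : (A ^ m)ᵀ = -(A ^ m) := by
    rw [Matrix.transpose_pow, hA, hm.neg_pow]
  have h1 : b ⬝ᵥ ((A ^ m) *ᵥ b) = ((A ^ m)ᵀ *ᵥ b) ⬝ᵥ b := by
    rw [dotProduct_mulVec, mulVec_transpose]
  rw [ht, Matrix.neg_mulVec, neg_dotProduct, dotProduct_comm] at h1
  rw [dotProduct_comm]
  linarith

lemma gen_orth {n : ℕ} (A : Matrix (Fin n) (Fin n) ℝ) (hA : Aᵀ = -A)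
    (b : Fin n → ℝ) (k j : ℕ) :
    ((A ^ 2) ^ k *ᵥ (A *ᵥ b)) ⬝ᵥ ((A ^ 2) ^ j *ᵥ b) = 0 := by
  have h1 : (A ^ 2) ^ k *ᵥ (A *ᵥ b) = (A ^ (2 * k + 1)) *ᵥ b := by
    rw [mulVec_mulVec, ← pow_mul, ← pow_succ]
  have h2 : (A ^ (2 * k + 1))ᵀ = -(A ^ (2 * k + 1)) := by
    rw [Matrix.transpose_pow, hA, Odd.neg_pow ⟨k, by ring⟩]
  rw [h1, dotProduct_comm, dotProduct_mulVec, ← mulVec_transpose, h2,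
    Matrix.neg_mulVec, neg_dotProduct, mulVec_mulVec, ← pow_mul, ← pow_add,
    dotProduct_comm, skew_pow_odd A hA _ ⟨k + j, by ring⟩, neg_zero]

theorem cgne_residual_in_even_krylov {n : ℕ} (A : Matrix (Fin n) (Fin n) ℝ)
    (hA : Aᵀ = -A) (b xE : Fin n → ℝ) (q : ℕ)
    (hxE : xE ∈ krylov (A ^ 2) (A *ᵥ b) q) :
    (b - A *ᵥ xE) ∈ krylov (A ^ 2) b (q + 1) ∧
      ∀ p ∈ krylov (A ^ 2) (A *ᵥ b) q, p ⬝ᵥ (b - A *ᵥ xE) = 0 := by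
  have hb : b ∈ krylov (A ^ 2) b (q + 1) := by
    apply Submodule.subset_span
    exact ⟨0, by simp [Set.mem_Iio], by simp [Matrix.one_mulVec]⟩
  have hAx : A *ᵥ xE ∈ krylov (A ^ 2) b (q + 1) := by
    induction hxE using Submodule.span_induction with
    | mem x hx =>
      obtain ⟨k, hk, rfl⟩ := hx
      apply Submodule.subset_span
      refine ⟨k + 1, ?_, ?_⟩
      · exact Nat.succ_lt_succ hk
      · show (A ^ 2) ^ (k + 1) *ᵥ b = A *ᵥ ((A ^ 2) ^ k *ᵥ (A *ᵥ b))
        rw [mulVec_mulVec, mulVec_mulVec, ← pow_mul, ← pow_mul, ← pow_succ', ← pow_succ,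
          show 2 * k + 1 + 1 = 2 * (k + 1) by ring]
    | zero => simp [Submodule.zero_mem]
    | add x y _ _ hx hy => rw [mulVec_add]; exact Submodule.add_mem _ hx hy
    | smul c x _ hx => rw [mulVec_smul]; exact Submodule.smul_mem _ _ hx
  have hres : (b - A *ᵥ xE) ∈ krylov (A ^ 2) b (q + 1) := Submodule.sub_mem _ hb hAx
  refine ⟨hres, ?_⟩
  intro p hp
  have key : ∀ r ∈ krylov (A ^ 2) b (q + 1), p ⬝ᵥ r = 0 := by
    intro r hr
    induction hp using Submodule.span_induction with
    | mem x hx =>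
      obtain ⟨k, hk, rfl⟩ := hx
      induction hr using Submodule.span_induction with
      | mem y hy =>
        obtain ⟨j, hj, rfl⟩ := hy
        exact gen_orth A hA b k j
      | zero => simp
      | add y z _ _ hy hz => rw [dotProduct_add, hy, hz, add_zero]
      | smul c y _ hy => rw [dotProduct_smul, hy, smul_zero]
    | zero => simp
    | add x y _ _ hx hy => rw [add_dotProduct, hx, hy, add_zero]
    | smul c x _ hx => rw [smul_dotProduct, hx, smul_zero]
  exact key _ hres
end

section
/- Let A be real skew-symmetric and nonsingular with Ax = b. If x^E ∈ K_q(A², Ab) satisfies pᵀ(b - Ax^E) = 0 for all p ∈ K_q(A², b), and x^G ∈ K_{2q}(A, b) satisfies pᵀ(b - Ax^G) = 0 for all p ∈ K_{2q}(A, b), then x^G = x^E, provided the Galerkin iterate x^G exists uniquely. -/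
open Matrix

lemma mulVec_dot {n : ℕ} (M : Matrix (Fin n) (Fin n) ℝ) (u w : Fin n → ℝ) :
    (M *ᵥ u) ⬝ᵥ w = u ⬝ᵥ (Mᵀ *ᵥ w) := by
  calc (M *ᵥ u) ⬝ᵥ w = w ⬝ᵥ (M *ᵥ u) := dotProduct_comm _ _
    _ = (w ᵥ* M) ⬝ᵥ u := Matrix.dotProduct_mulVec _ _ _
    _ = u ⬝ᵥ (w ᵥ* M) := dotProduct_comm _ _
    _ = u ⬝ᵥ (Mᵀ *ᵥ w) := by rw [Matrix.mulVec_transpose]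

lemma skew_quad {n : ℕ} (S : Matrix (Fin n) (Fin n) ℝ) (hS : Sᵀ = -S)
    (v : Fin n → ℝ) : v ⬝ᵥ S *ᵥ v = 0 := by
  have h : (S *ᵥ v) ⬝ᵥ v = v ⬝ᵥ (Sᵀ *ᵥ v) := mulVec_dot S v v
  rw [hS, Matrix.neg_mulVec, dotProduct_neg, dotProduct_comm] at h
  linarith

lemma odd_pow_skew {n : ℕ} (A : Matrix (Fin n) (Fin n) ℝ) (hA : Aᵀ = -A)
    (m : ℕ) : (A ^ (2 * m + 1))ᵀ = -(A ^ (2 * m + 1)) := by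
  rw [Matrix.transpose_pow, hA, Odd.neg_pow ⟨m, by ring⟩]

lemma odd_even_orth {n : ℕ} (A : Matrix (Fin n) (Fin n) ℝ) (hA : Aᵀ = -A)
    (b : Fin n → ℝ) (s t : ℕ) :
    (A ^ (2 * s + 1) *ᵥ b) ⬝ᵥ (A ^ (2 * t) *ᵥ b) = 0 := by
  rw [mulVec_dot, odd_pow_skew A hA s, Matrix.neg_mulVec, dotProduct_neg,
    Matrix.mulVec_mulVec, ← pow_add,
    show 2 * s + 1 + 2 * t = 2 * (s + t) + 1 by ring,
    skew_quad _ (odd_pow_skew A hA (s + t)) b, neg_zero]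

theorem galerkin_eq_cgne {n : ℕ} (A : Matrix (Fin n) (Fin n) ℝ)
    (hA : Aᵀ = -A) (hdet : A.det ≠ 0) (b x xE xG : Fin n → ℝ) (q : ℕ)
    (hx : A *ᵥ x = b)
    (hxE : xE ∈ krylov (A ^ 2) (A *ᵥ b) q)
    (horthE : ∀ p ∈ krylov (A ^ 2) b q, p ⬝ᵥ (b - A *ᵥ xE) = 0)
    (hxG : xG ∈ krylov A b (2 * q))
    (horthG : ∀ p ∈ krylov A b (2 * q), p ⬝ᵥ (b - A *ᵥ xG) = 0)
    (huniq : ∀ y ∈ krylov A b (2 * q),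
      (∀ p ∈ krylov A b (2 * q), p ⬝ᵥ (b - A *ᵥ y) = 0) → y = xG) :
    xG = xE := by
  have hgen : ∀ k : ℕ, (A ^ 2) ^ k *ᵥ (A *ᵥ b) = A ^ (2 * k + 1) *ᵥ b := by
    intro k
    rw [Matrix.mulVec_mulVec, ← pow_mul, ← pow_succ]
  -- step 1 : xE ∈ K_{2q}(A,b)
  have hmem : xE ∈ krylov A b (2 * q) := by
    refine Submodule.span_le.mpr ?_ hxE
    rintro _ ⟨k, hk, rfl⟩
    simp only [Set.mem_Iio] at hk
    refine Submodule.subset_span ⟨2 * k + 1, ?_, ?_⟩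
    · simp only [Set.mem_Iio]; omega
    · exact (hgen k).symm
  -- step 2 : residual lies in K_{q+1}(A², b)
  have hres : b - A *ᵥ xE ∈ krylov (A ^ 2) b (q + 1) := by
    have hb : b ∈ krylov (A ^ 2) b (q + 1) :=
      Submodule.subset_span ⟨0, by simp, by simp⟩
    have hAx : A *ᵥ xE ∈ krylov (A ^ 2) b (q + 1) := by
      have heq : A *ᵥ xE = A.mulVecLin xE := rfl
      rw [heq]
      have hsub : (Submodule.map A.mulVecLin (krylov (A ^ 2) (A *ᵥ b) q))
          ≤ krylov (A ^ 2) b (q + 1) := by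
        rw [krylov, Submodule.map_span, Submodule.span_le]
        rintro _ ⟨_, ⟨k, hk, rfl⟩, rfl⟩
        simp only [Set.mem_Iio] at hk
        refine Submodule.subset_span ⟨k + 1, ?_, ?_⟩
        · simp only [Set.mem_Iio]; omega
        · show (A ^ 2) ^ (k + 1) *ᵥ b = A.mulVecLin ((A ^ 2) ^ k *ᵥ (A *ᵥ b))
          simp only [Matrix.mulVecLin_apply]
          rw [hgen k, Matrix.mulVec_mulVec, ← pow_succ', ← pow_mul,
            show 2 * (k + 1) = 2 * k + 1 + 1 from by ring]
      exact hsub (Submodule.mem_map_of_mem hxE)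
    exact Submodule.sub_mem _ hb hAx
  -- step 3 : odd generators are orthogonal to everything in K_{q+1}(A², b)
  have hodd : ∀ w ∈ krylov (A ^ 2) b (q + 1), ∀ s : ℕ,
      (A ^ (2 * s + 1) *ᵥ b) ⬝ᵥ w = 0 := by
    intro w hw
    induction hw using Submodule.span_induction with
    | mem v hv =>
        obtain ⟨t, ht, rfl⟩ := hv
        intro s
        show (A ^ (2 * s + 1) *ᵥ b) ⬝ᵥ ((A ^ 2) ^ t *ᵥ b) = 0
        rw [← pow_mul]
        exact odd_even_orth A hA b s t
    | zero => intro s; simp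
    | add u v _ _ hu hv => intro s; rw [dotProduct_add, hu s, hv s, add_zero]
    | smul c v _ hv => intro s; rw [dotProduct_smul, hv s, smul_zero]
  -- step 4 : xE satisfies Galerkin orthogonality on K_{2q}(A,b)
  have horth : ∀ p ∈ krylov A b (2 * q), p ⬝ᵥ (b - A *ᵥ xE) = 0 := by
    intro p hp
    induction hp using Submodule.span_induction with
    | mem v hv =>
        obtain ⟨j, hj, rfl⟩ := hv
        simp only [Set.mem_Iio] at hj
        rcases Nat.even_or_odd j with ⟨k, hk⟩ | ⟨k, hk⟩
        · subst hk
          refine horthE _ (Submodule.subset_span ⟨k, ?_, ?_⟩)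
          · simp only [Set.mem_Iio]; omega
          · show (A ^ 2) ^ k *ᵥ b = A ^ (k + k) *ᵥ b
            rw [← pow_mul, two_mul]
        · subst hk
          show (A ^ (2 * k + 1) *ᵥ b) ⬝ᵥ (b - A *ᵥ xE) = 0
          exact hodd _ hres k
    | zero => simp
    | add u v _ _ hu hv => rw [add_dotProduct, hu, hv, add_zero]
    | smul c v _ hv => rw [smul_dotProduct, hv, smul_zero]
  exact (huniq xE hmem horth).symm
end

section
/- If A is real skew-symmetric and x^R ∈ K_q(A², Ab), then A(b - Ax^R) ∈ K_{q+1}(A², Ab), and hence A(b - Ax^R) is orthogonal to K_{q+1}(A², b). -/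
open Matrix

lemma mem_krylov_gen {n : ℕ} (M : Matrix (Fin n) (Fin n) ℝ) (v : Fin n → ℝ) {m k : ℕ}
    (hk : k < m) : (M ^ k) *ᵥ v ∈ krylov M v m :=
  Submodule.subset_span ⟨k, hk, rfl⟩

theorem cgnr_Aresidual_in_odd_krylov {n : ℕ} (A : Matrix (Fin n) (Fin n) ℝ)
    (hA : Aᵀ = -A) (b xR : Fin n → ℝ) (q : ℕ)
    (hxR : xR ∈ krylov (A ^ 2) (A *ᵥ b) q) :
    A *ᵥ (b - A *ᵥ xR) ∈ krylov (A ^ 2) (A *ᵥ b) (q + 1) ∧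
      ∀ p ∈ krylov (A ^ 2) b (q + 1), p ⬝ᵥ (A *ᵥ (b - A *ᵥ xR)) = 0 := by
  have hA2 : (A ^ 2)ᵀ = A ^ 2 := by
    rw [Matrix.transpose_pow, hA, Even.neg_pow even_two]
  -- odd powers of A are skew
  have hodd : ∀ m : ℕ, Odd m → (A ^ m)ᵀ = -(A ^ m) := by
    intro m hm
    rw [Matrix.transpose_pow, hA, hm.neg_pow]
  have hsym : ∀ (k : ℕ) (w : Fin n → ℝ), (A ^ 2) ^ k *ᵥ w = w ᵥ* (A ^ 2) ^ k := by
    intro k w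
    rw [← Matrix.vecMul_transpose, Matrix.transpose_pow, hA2]
  -- part 1: membership
  have hmem : A *ᵥ (b - A *ᵥ xR) ∈ krylov (A ^ 2) (A *ᵥ b) (q + 1) := by
    rw [Matrix.mulVec_sub]
    apply Submodule.sub_mem
    · have := mem_krylov_gen (A ^ 2) (A *ᵥ b) (Nat.succ_pos q)
      simpa using this
    · have hA2x : A *ᵥ (A *ᵥ xR) = (A ^ 2) *ᵥ xR := by
        rw [Matrix.mulVec_mulVec, ← pow_two]
      rw [hA2x]
      refine Submodule.span_induction ?_ ?_ ?_ ?_ hxR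
      · rintro x ⟨k, hk, rfl⟩
        have hstep : (A ^ 2) *ᵥ ((A ^ 2) ^ k *ᵥ (A *ᵥ b)) = ((A ^ 2) ^ (k + 1)) *ᵥ (A *ᵥ b) := by
          rw [Matrix.mulVec_mulVec, ← pow_succ']
        rw [hstep]
        exact mem_krylov_gen _ _ (by simpa using Nat.succ_lt_succ hk)
      · simp [Matrix.mulVec_zero]
      · intro x y _ _ hx hy
        rw [Matrix.mulVec_add]; exact Submodule.add_mem _ hx hy
      · intro c x _ hx
        rw [Matrix.mulVec_smul]; exact Submodule.smul_mem _ c hx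
  refine ⟨hmem, ?_⟩
  -- key: b ⬝ᵥ (A^m *ᵥ b) = 0 for odd m
  have hkey : ∀ m : ℕ, Odd m → b ⬝ᵥ ((A ^ m) *ᵥ b) = 0 := by
    intro m hm
    have h2 : b ᵥ* (A ^ m) = -((A ^ m) *ᵥ b) := by
      have : b ᵥ* (A ^ m) = (A ^ m)ᵀ *ᵥ b := by
        rw [← Matrix.vecMul_transpose, Matrix.transpose_transpose]
      rw [this, hodd m hm, Matrix.neg_mulVec]
    have h3 : b ⬝ᵥ ((A ^ m) *ᵥ b) = -(b ⬝ᵥ ((A ^ m) *ᵥ b)) := by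
      calc b ⬝ᵥ ((A ^ m) *ᵥ b) = (b ᵥ* (A ^ m)) ⬝ᵥ b := Matrix.dotProduct_mulVec _ _ _
        _ = (-((A ^ m) *ᵥ b)) ⬝ᵥ b := by rw [h2]
        _ = -(((A ^ m) *ᵥ b) ⬝ᵥ b) := neg_dotProduct _ _
        _ = -(b ⬝ᵥ ((A ^ m) *ᵥ b)) := by rw [dotProduct_comm]
    linarith
  -- generators are orthogonal
  have hgen : ∀ k j : ℕ, ((A ^ 2) ^ k *ᵥ b) ⬝ᵥ ((A ^ 2) ^ j *ᵥ (A *ᵥ b)) = 0 := by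
    intro k j
    have hcomb : (A ^ 2) ^ k *ᵥ ((A ^ 2) ^ j *ᵥ (A *ᵥ b)) = (A ^ (2 * k + 2 * j + 1)) *ᵥ b := by
      rw [Matrix.mulVec_mulVec, Matrix.mulVec_mulVec, ← pow_mul, ← pow_mul, ← pow_add,
        ← pow_succ]
    have h1 : ((A ^ 2) ^ k *ᵥ b) ⬝ᵥ ((A ^ 2) ^ j *ᵥ (A *ᵥ b)) =
        b ⬝ᵥ ((A ^ (2 * k + 2 * j + 1)) *ᵥ b) := by
      rw [hsym k b, ← Matrix.dotProduct_mulVec, hcomb]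
    rw [h1]
    exact hkey _ ⟨k + j, by ring⟩
  -- extend by bilinearity
  intro p hp
  refine Submodule.span_induction ?_ ?_ ?_ ?_ hp
  · rintro x ⟨k, _, rfl⟩
    refine Submodule.span_induction ?_ ?_ ?_ ?_ hmem
    · rintro y ⟨j, _, rfl⟩
      exact hgen k j
    · simp
    · intro y z _ _ hy hz
      rw [dotProduct_add, hy, hz, add_zero]
    · intro c y _ hy
      rw [dotProduct_smul, hy, smul_zero]
  · simp
  · intro x y _ _ hx hy
    rw [add_dotProduct, hx, hy, add_zero]
  · intro c x _ hx
    rw [smul_dotProduct, hx, smul_zero]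
end

section
/- Let A be real skew-symmetric and nonsingular. The minimum residual iterates x^M_m := argmin over z ∈ K_m(A,b) of ‖b - Az‖ satisfy x^M_{2q+1} = x^M_{2q}, i.e., odd iterates equal the preceding even iterates (the minimizer over K_{2q+1}(A,b) lies in K_{2q}(A,b)). -/
open Matrix

lemma enorm_eq_sqrt_dot {n : ℕ} (v : Fin n → ℝ) : _root_.enorm v = Real.sqrt (v ⬝ᵥ v) := by
  unfold _root_.enorm dotProduct; congr 1; exact Finset.sum_congr rfl fun i _ => sq (v i)

lemma dot_mulVec_eq {n : ℕ} (M : Matrix (Fin n) (Fin n) ℝ) (x y : Fin n → ℝ) :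
    x ⬝ᵥ (M *ᵥ y) = (Mᵀ *ᵥ x) ⬝ᵥ y := by
  rw [dotProduct_mulVec, mulVec_transpose]

lemma skew_dot {n : ℕ} (A : Matrix (Fin n) (Fin n) ℝ) (hA : Aᵀ = -A) (b : Fin n → ℝ)
    {i k : ℕ} (h : Odd (i + k)) : (A ^ i *ᵥ b) ⬝ᵥ (A ^ k *ᵥ b) = 0 := by
  have key : ∀ m : ℕ, Odd m → b ⬝ᵥ (A ^ m *ᵥ b) = 0 := by
    intro m hm
    have ht : (A ^ m)ᵀ = -(A ^ m) := by
      rw [transpose_pow, hA, hm.neg_pow]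
    have : b ⬝ᵥ (A ^ m *ᵥ b) = -(b ⬝ᵥ (A ^ m *ᵥ b)) :=
      calc b ⬝ᵥ (A ^ m *ᵥ b) = ((A ^ m)ᵀ *ᵥ b) ⬝ᵥ b := dot_mulVec_eq _ _ _
        _ = (-(A ^ m *ᵥ b)) ⬝ᵥ b := by rw [ht, neg_mulVec]
        _ = -((A ^ m *ᵥ b) ⬝ᵥ b) := neg_dotProduct _ _
        _ = -(b ⬝ᵥ (A ^ m *ᵥ b)) := by rw [dotProduct_comm]
    linarith
  have ht : (A ^ i)ᵀ = ((-1 : ℝ) ^ i) • (A ^ i) := by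
    rw [transpose_pow, hA, ← neg_one_smul ℝ A, smul_pow]
  have step : (A ^ i *ᵥ b) ⬝ᵥ (A ^ k *ᵥ b)
      = ((-1 : ℝ) ^ i) * (b ⬝ᵥ (A ^ (i + k) *ᵥ b)) :=
    calc (A ^ i *ᵥ b) ⬝ᵥ (A ^ k *ᵥ b)
        = ((A ^ i)ᵀᵀ *ᵥ b) ⬝ᵥ (A ^ k *ᵥ b) := by rw [transpose_transpose]
      _ = b ⬝ᵥ ((A ^ i)ᵀ *ᵥ (A ^ k *ᵥ b)) := (dot_mulVec_eq _ _ _).symm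
      _ = b ⬝ᵥ (((-1 : ℝ) ^ i) • (A ^ (i + k) *ᵥ b)) := by
          rw [ht, smul_mulVec, mulVec_mulVec, ← pow_add]
      _ = ((-1 : ℝ) ^ i) * (b ⬝ᵥ (A ^ (i + k) *ᵥ b)) := by
          rw [dotProduct_smul, smul_eq_mul]
  rw [step, key _ h, mul_zero]

lemma ortho_span {n : ℕ} (A : Matrix (Fin n) (Fin n) ℝ) (hA : Aᵀ = -A) (b : Fin n → ℝ)
    {v w : Fin n → ℝ}
    (hv : v ∈ Submodule.span ℝ {x | ∃ i, Even i ∧ x = A ^ i *ᵥ b})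
    (hw : w ∈ Submodule.span ℝ {x | ∃ k, Odd k ∧ x = A ^ k *ᵥ b}) :
    v ⬝ᵥ w = 0 := by
  induction hv using Submodule.span_induction with
  | mem x hx =>
    obtain ⟨i, hi, rfl⟩ := hx
    induction hw using Submodule.span_induction with
    | mem y hy =>
      obtain ⟨k, hk, rfl⟩ := hy
      exact skew_dot A hA b (hi.add_odd hk)
    | zero => simp
    | add y z _ _ h1 h2 => rw [dotProduct_add, h1, h2, add_zero]
    | smul c y _ h1 => rw [dotProduct_smul, h1, smul_zero]
  | zero => simp
  | add y z _ _ h1 h2 => rw [add_dotProduct, h1, h2, add_zero]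
  | smul c y _ h1 => rw [smul_dotProduct, h1, smul_zero]

lemma dot_self_nonneg {n : ℕ} (v : Fin n → ℝ) : 0 ≤ v ⬝ᵥ v :=
  Finset.sum_nonneg fun i _ => mul_self_nonneg (v i)

lemma enorm_le_enorm {n : ℕ} {u v : Fin n → ℝ} (h : u ⬝ᵥ u ≤ v ⬝ᵥ v) :
    _root_.enorm u ≤ _root_.enorm v := by
  rw [enorm_eq_sqrt_dot, enorm_eq_sqrt_dot]
  exact Real.sqrt_le_sqrt h

lemma dot_le_dot_of_enorm {n : ℕ} {u v : Fin n → ℝ} (h : _root_.enorm u ≤ _root_.enorm v) :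
    u ⬝ᵥ u ≤ v ⬝ᵥ v := by
  rw [enorm_eq_sqrt_dot, enorm_eq_sqrt_dot] at h
  have h2 := mul_self_le_mul_self (Real.sqrt_nonneg _) h
  rwa [Real.mul_self_sqrt (dot_self_nonneg u), Real.mul_self_sqrt (dot_self_nonneg v)] at h2

lemma krylov_eq_range {n : ℕ} (A : Matrix (Fin n) (Fin n) ℝ) (b : Fin n → ℝ) (m : ℕ) :
    krylov A b m = Submodule.span ℝ (Set.range fun j : Fin m => A ^ (j : ℕ) *ᵥ b) := by
  unfold krylov
  congr 1
  ext x
  constructor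
  · rintro ⟨k, hk, rfl⟩
    exact ⟨⟨k, hk⟩, rfl⟩
  · rintro ⟨j, rfl⟩
    exact ⟨(j : ℕ), j.2, rfl⟩

lemma dot_sub_expand {n : ℕ} (x y : Fin n → ℝ) :
    (x - y) ⬝ᵥ (x - y) = x ⬝ᵥ x - 2 * (x ⬝ᵥ y) + y ⬝ᵥ y := by
  rw [sub_dotProduct, dotProduct_sub, dotProduct_sub, dotProduct_comm y x]; ring

lemma dot_add_expand {n : ℕ} (x y : Fin n → ℝ) :
    (x + y) ⬝ᵥ (x + y) = x ⬝ᵥ x + 2 * (x ⬝ᵥ y) + y ⬝ᵥ y := by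
  rw [add_dotProduct, dotProduct_add, dotProduct_add, dotProduct_comm y x]; ring

/-- For any `z` in the odd Krylov space there is `z'` in the previous even Krylov space
with residual no larger. -/
lemma reduce_step {n : ℕ} (A : Matrix (Fin n) (Fin n) ℝ) (hA : Aᵀ = -A) (b : Fin n → ℝ)
    (q : ℕ) {z : Fin n → ℝ} (hz : z ∈ krylov A b (2 * q + 1)) :
    ∃ z' ∈ krylov A b (2 * q),
      (b - A *ᵥ z') ⬝ᵥ (b - A *ᵥ z') ≤ (b - A *ᵥ z) ⬝ᵥ (b - A *ᵥ z) := by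
  rw [krylov_eq_range, Submodule.mem_span_range_iff_exists_fun] at hz
  obtain ⟨c, hc⟩ := hz
  set d : Fin (2 * q + 1) → ℝ := fun j => if Odd (j : ℕ) then c j else 0 with hd
  set z' : Fin n → ℝ := ∑ j, d j • (A ^ (j : ℕ) *ᵥ b) with hz'
  have hz'mem : z' ∈ krylov A b (2 * q) := by
    apply Submodule.sum_mem
    intro j _
    by_cases hj : Odd (j : ℕ)
    · have hjlt : (j : ℕ) < 2 * q := by
        rcases lt_or_eq_of_le (Nat.lt_succ_iff.mp j.2) with h | h
        · exact h
        · exfalso; rw [h] at hj; exact (Nat.not_odd_iff_even.mpr (even_two_mul q)) hj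
      exact Submodule.smul_mem _ _ (Submodule.subset_span ⟨(j : ℕ), hjlt, rfl⟩)
    · simp [hd, hj]
  refine ⟨z', hz'mem, ?_⟩
  -- orthogonality
  have hAsum : ∀ e : Fin (2 * q + 1) → ℝ,
      A *ᵥ (∑ j, e j • (A ^ (j : ℕ) *ᵥ b)) = ∑ j, e j • (A ^ ((j : ℕ) + 1) *ᵥ b) := by
    intro e
    show A.mulVecLin _ = _
    rw [map_sum]
    refine Finset.sum_congr rfl fun j _ => ?_
    rw [LinearMap.map_smul]
    congr 1
    show A *ᵥ (A ^ (j : ℕ) *ᵥ b) = _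
    rw [mulVec_mulVec, ← pow_succ']
  have hresid : b - A *ᵥ z = (b - A *ᵥ z') - (A *ᵥ z - A *ᵥ z') := by abel
  have hAz : A *ᵥ z = ∑ j, c j • (A ^ ((j : ℕ) + 1) *ᵥ b) := by rw [← hc, hAsum]
  have hAz' : A *ᵥ z' = ∑ j, d j • (A ^ ((j : ℕ) + 1) *ᵥ b) := by rw [hz', hAsum]
  have hr_even : (b - A *ᵥ z') ∈ Submodule.span ℝ {x | ∃ i, Even i ∧ x = A ^ i *ᵥ b} := by
    apply Submodule.sub_mem
    · exact Submodule.subset_span ⟨0, Even.zero, by rw [pow_zero, one_mulVec]⟩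
    · rw [hAz']
      apply Submodule.sum_mem
      intro j _
      by_cases hj : Odd (j : ℕ)
      · exact Submodule.smul_mem _ _
          (Submodule.subset_span ⟨(j : ℕ) + 1, hj.add_one, rfl⟩)
      · simp [hd, hj]
  have hw_odd : (A *ᵥ z - A *ᵥ z') ∈ Submodule.span ℝ {x | ∃ k, Odd k ∧ x = A ^ k *ᵥ b} := by
    rw [hAz, hAz', ← Finset.sum_sub_distrib]
    apply Submodule.sum_mem
    intro j _
    rw [← sub_smul]
    by_cases hj : Odd (j : ℕ)
    · simp [hd, hj]
    · have hje : Even (j : ℕ) := Nat.not_odd_iff_even.mp hj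
      exact Submodule.smul_mem _ _
        (Submodule.subset_span ⟨(j : ℕ) + 1, Even.add_one hje, rfl⟩)
  have horth : (b - A *ᵥ z') ⬝ᵥ (A *ᵥ z - A *ᵥ z') = 0 := ortho_span A hA b hr_even hw_odd
  rw [hresid]
  set r := b - A *ᵥ z'
  set w := A *ᵥ z - A *ᵥ z'
  rw [dot_sub_expand r w, horth]
  have := dot_self_nonneg w
  linarith

theorem minres_odd_eq_even {n : ℕ} (A : Matrix (Fin n) (Fin n) ℝ)
    (hA : Aᵀ = -A) (hdet : A.det ≠ 0) (b xM1 xM0 : Fin n → ℝ) (q : ℕ)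
    (hxM1 : xM1 ∈ krylov A b (2 * q + 1))
    (hmin1 : ∀ z ∈ krylov A b (2 * q + 1), _root_.enorm (b - A *ᵥ xM1) ≤ _root_.enorm (b - A *ᵥ z))
    (hxM0 : xM0 ∈ krylov A b (2 * q))
    (hmin0 : ∀ z ∈ krylov A b (2 * q), _root_.enorm (b - A *ᵥ xM0) ≤ _root_.enorm (b - A *ᵥ z)) :
    xM1 = xM0 := by
  have hsub : krylov A b (2 * q) ≤ krylov A b (2 * q + 1) :=
    Submodule.span_mono (Set.image_mono fun k hk => lt_trans hk (Nat.lt_succ_self _))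
  set u := b - A *ᵥ xM1
  set v := b - A *ᵥ xM0
  -- u⬝u ≤ v⬝v since xM0 is a candidate for the big problem
  have h10 : u ⬝ᵥ u ≤ v ⬝ᵥ v := dot_le_dot_of_enorm (hmin1 _ (hsub hxM0))
  -- v⬝v ≤ u⬝u via the reduction
  have h01 : v ⬝ᵥ v ≤ u ⬝ᵥ u := by
    obtain ⟨z', hz', hle⟩ := reduce_step A hA b q hxM1
    exact le_trans (le_trans (dot_le_dot_of_enorm (hmin0 _ hz')) hle) le_rfl
  have heq : u ⬝ᵥ u = v ⬝ᵥ v := le_antisymm h10 h01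
  -- midpoint
  set mid : Fin n → ℝ := (2⁻¹ : ℝ) • (xM1 + xM0)
  have hmid : mid ∈ krylov A b (2 * q + 1) :=
    Submodule.smul_mem _ _ (Submodule.add_mem _ hxM1 (hsub hxM0))
  have hbm : b - A *ᵥ mid = (2⁻¹ : ℝ) • (u + v) := by
    show b - A *ᵥ ((2⁻¹ : ℝ) • (xM1 + xM0)) = _
    rw [mulVec_smul, mulVec_add]
    simp only [u, v]
    ext i
    simp [Pi.smul_apply, smul_eq_mul]
    ring
  have hmge : u ⬝ᵥ u ≤ (b - A *ᵥ mid) ⬝ᵥ (b - A *ᵥ mid) :=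
    dot_le_dot_of_enorm (hmin1 _ hmid)
  rw [hbm] at hmge
  have hexp : ((2⁻¹ : ℝ) • (u + v)) ⬝ᵥ ((2⁻¹ : ℝ) • (u + v))
      = (2⁻¹ : ℝ) * (2⁻¹ : ℝ) * (u ⬝ᵥ u + 2 * (u ⬝ᵥ v) + v ⬝ᵥ v) := by
    rw [smul_dotProduct, dotProduct_smul, dot_add_expand, smul_eq_mul, smul_eq_mul]
    ring
  rw [hexp] at hmge
  have hdiff : (u - v) ⬝ᵥ (u - v) = 0 := by
    have expand := dot_sub_expand u v
    have hnn := dot_self_nonneg (u - v)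
    nlinarith [hmge, heq]
  have huv : u = v := sub_eq_zero.mp (dotProduct_self_eq_zero.mp hdiff)
  have hAx : A *ᵥ xM1 = A *ᵥ xM0 := sub_right_inj.mp huv
  have hinj : xM1 = xM0 := by
    have h1 : A⁻¹ *ᵥ (A *ᵥ xM1) = A⁻¹ *ᵥ (A *ᵥ xM0) := by rw [hAx]
    rwa [mulVec_mulVec, mulVec_mulVec, nonsing_inv_mul A (isUnit_iff_ne_zero.mpr hdet),
      one_mulVec, one_mulVec] at h1
  exact hinj
end

section
/- Let A be real skew-symmetric with Ax = b. Suppose z = z_e + z_o with z_e ∈ K_{q_e}(A², b) and z_o ∈ K_{q_o}(A², Ab). Then ‖b - Az‖² = ‖b - Az_o‖² + ‖Az_e‖². -/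
open Matrix

noncomputable def euclidNorm {n : ℕ} (v : Fin n → ℝ) : ℝ := Real.sqrt (∑ i, v i ^ 2)

lemma enorm_sq {n : ℕ} (v : Fin n → ℝ) : euclidNorm v ^ 2 = v ⬝ᵥ v := by
  rw [euclidNorm, Real.sq_sqrt (Finset.sum_nonneg fun i _ => sq_nonneg _)]
  simp [dotProduct, sq]

lemma odd_pow_dot {n : ℕ} (A : Matrix (Fin n) (Fin n) ℝ) (hA : Aᵀ = -A)
    (b : Fin n → ℝ) (m : ℕ) (hm : Odd m) : b ⬝ᵥ ((A ^ m) *ᵥ b) = 0 := by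
  have hS : (A ^ m)ᵀ = -(A ^ m) := by
    rw [transpose_pow, hA, hm.neg_pow]
  have h1 : b ⬝ᵥ ((A ^ m) *ᵥ b) = -(b ⬝ᵥ ((A ^ m) *ᵥ b)) := by
    conv_lhs => rw [dotProduct_mulVec, ← mulVec_transpose, hS, neg_mulVec,
      neg_dotProduct, dotProduct_comm]
  linarith

lemma orth_lemma {n : ℕ} (A : Matrix (Fin n) (Fin n) ℝ) (hA : Aᵀ = -A)
    (b ze zo : Fin n → ℝ) (qe qo : ℕ)
    (hze : ze ∈ krylov (A ^ 2) b qe) (hzo : zo ∈ krylov (A ^ 2) (A *ᵥ b) qo) :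
    (b - A *ᵥ zo) ⬝ᵥ (A *ᵥ ze) = 0 := by
  induction hze using Submodule.span_induction with
  | mem v hv =>
    obtain ⟨k, -, rfl⟩ := hv
    have h1 : A *ᵥ ((A ^ 2) ^ k *ᵥ b) = (A ^ (2 * k + 1)) *ᵥ b := by
      rw [mulVec_mulVec, ← pow_mul, ← pow_succ']
    rw [h1, sub_dotProduct, odd_pow_dot A hA b _ ⟨k, by ring⟩, zero_sub, neg_eq_zero]
    induction hzo using Submodule.span_induction with
    | mem w hw =>
      obtain ⟨l, -, rfl⟩ := hw
      have h2 : A *ᵥ ((A ^ 2) ^ l *ᵥ (A *ᵥ b)) = (A ^ (2 * l + 2)) *ᵥ b := by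
        rw [mulVec_mulVec, mulVec_mulVec, ← pow_mul]
        rw [← pow_succ', ← pow_succ]
      have heven : (A ^ (2 * l + 2))ᵀ = A ^ (2 * l + 2) := by
        rw [transpose_pow, hA, Even.neg_pow ⟨l + 1, by ring⟩]
      rw [h2, dotProduct_comm, dotProduct_mulVec, ← mulVec_transpose,
        heven, mulVec_mulVec, ← pow_add, dotProduct_comm]
      exact odd_pow_dot A hA b _ ⟨l + k + 1, by ring⟩
    | zero => simp
    | add w₁ w₂ _ _ h₁ h₂ => rw [mulVec_add, add_dotProduct, h₁, h₂, add_zero]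
    | smul c w _ h => rw [mulVec_smul, smul_dotProduct, h, smul_zero]
  | zero => simp
  | add v₁ v₂ _ _ h₁ h₂ => rw [mulVec_add, dotProduct_add, h₁, h₂, add_zero]
  | smul c v _ h => rw [mulVec_smul, dotProduct_smul, h, smul_zero]

theorem residual_pythagorean {n : ℕ} (A : Matrix (Fin n) (Fin n) ℝ)
    (hA : Aᵀ = -A) (b x z ze zo : Fin n → ℝ) (qe qo : ℕ)
    (hx : A *ᵥ x = b) (hz : z = ze + zo)
    (hze : ze ∈ krylov (A ^ 2) b qe) (hzo : zo ∈ krylov (A ^ 2) (A *ᵥ b) qo) :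
    euclidNorm (b - A *ᵥ z) ^ 2 = euclidNorm (b - A *ᵥ zo) ^ 2 + euclidNorm (A *ᵥ ze) ^ 2 := by
  have horth := orth_lemma A hA b ze zo qe qo hze hzo
  have horth' : (A *ᵥ ze) ⬝ᵥ (b - A *ᵥ zo) = 0 := by rw [dotProduct_comm]; exact horth
  have key : b - A *ᵥ z = (b - A *ᵥ zo) - (A *ᵥ ze) := by
    rw [hz, mulVec_add]; abel
  rw [key, enorm_sq, enorm_sq, enorm_sq]
  have h3 := horth'
  rw [dotProduct_sub] at h3
  have h4 := horth
  rw [sub_dotProduct] at h4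
  simp only [sub_dotProduct, dotProduct_sub]
  linarith
end

section
/- Let A be real skew-symmetric and nonsingular with Ax = b, and let z ∈ K_m(A, b) be written as z = z_e + z_o with z_e ∈ K_{⌈m/2⌉}(A², b) and z_o ∈ K_{⌊m/2⌋}(A², Ab). Then ‖z - x‖ ≥ ‖z_o - x‖ and ‖b - Az‖ ≥ ‖b - Az_o‖, i.e., projecting z onto the odd Krylov subspace cannot increase the error or residual norm. -/
open Matrix

noncomputable def eucNorm {n : ℕ} (v : Fin n → ℝ) : ℝ := Real.sqrt (∑ i, v i ^ 2)

lemma skew_dot_s18 {n : ℕ} {A : Matrix (Fin n) (Fin n) ℝ} (hA : Aᵀ = -A)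
    (u v : Fin n → ℝ) : (A *ᵥ u) ⬝ᵥ v = -(u ⬝ᵥ (A *ᵥ v)) := by
  rw [dotProduct_comm, dotProduct_mulVec, ← mulVec_transpose, hA, neg_mulVec,
    neg_dotProduct, dotProduct_comm]

lemma skew_dot_pow {n : ℕ} {A : Matrix (Fin n) (Fin n) ℝ} (hA : Aᵀ = -A)
    (i : ℕ) (u v : Fin n → ℝ) :
    ((A ^ i) *ᵥ u) ⬝ᵥ v = (-1 : ℝ) ^ i * (u ⬝ᵥ ((A ^ i) *ᵥ v)) := by
  induction i generalizing u with
  | zero => simp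
  | succ k ih =>
    have h1 : (A ^ (k + 1)) *ᵥ u = (A ^ k) *ᵥ (A *ᵥ u) := by
      rw [pow_succ, ← mulVec_mulVec]
    have h2 : A *ᵥ ((A ^ k) *ᵥ v) = (A ^ (k + 1)) *ᵥ v := by
      rw [pow_succ', ← mulVec_mulVec]
    rw [h1, ih, skew_dot_s18 hA, h2, pow_succ]
    ring

lemma skew_odd_self {n : ℕ} {A : Matrix (Fin n) (Fin n) ℝ} (hA : Aᵀ = -A)
    {k : ℕ} (hk : Odd k) (u : Fin n → ℝ) : ((A ^ k) *ᵥ u) ⬝ᵥ u = 0 := by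
  have h := skew_dot_pow hA k u u
  rw [hk.neg_one_pow] at h
  rw [dotProduct_comm u] at h
  linarith

lemma skew_pow_pow {n : ℕ} {A : Matrix (Fin n) (Fin n) ℝ} (hA : Aᵀ = -A)
    {i j : ℕ} (hij : Odd (i + j)) (b : Fin n → ℝ) :
    ((A ^ i) *ᵥ b) ⬝ᵥ ((A ^ j) *ᵥ b) = 0 := by
  have h := skew_dot_pow hA i b ((A ^ j) *ᵥ b)
  rw [mulVec_mulVec, ← pow_add] at h
  have h2 : b ⬝ᵥ ((A ^ (i + j)) *ᵥ b) = 0 := by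
    rw [dotProduct_comm]; exact skew_odd_self hA hij b
  rw [h, h2, mul_zero]

lemma dot_span_zero {n : ℕ} {w : Fin n → ℝ} {s : Set (Fin n → ℝ)}
    (h : ∀ v ∈ s, w ⬝ᵥ v = 0) {v : Fin n → ℝ}
    (hv : v ∈ Submodule.span ℝ s) : w ⬝ᵥ v = 0 := by
  induction hv using Submodule.span_induction with
  | mem x hx => exact h x hx
  | zero => simp
  | add x y _ _ hx hy => rw [dotProduct_add, hx, hy, add_zero]
  | smul a x _ hx => rw [dotProduct_smul, hx, smul_zero]

lemma enorm_add_left {n : ℕ} {u v : Fin n → ℝ} (h : u ⬝ᵥ v = 0) :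
    eucNorm v ≤ eucNorm (u + v) := by
  unfold eucNorm
  apply Real.sqrt_le_sqrt
  have h0 : ∑ i, u i * v i = 0 := h
  have hsq : ∑ i, (u + v) i ^ 2 =
      (∑ i, u i ^ 2) + 2 * (∑ i, u i * v i) + ∑ i, v i ^ 2 := by
    rw [Finset.mul_sum, ← Finset.sum_add_distrib, ← Finset.sum_add_distrib]
    exact Finset.sum_congr rfl fun i _ => by simp only [Pi.add_apply]; ring
  rw [hsq, h0]
  have : (0 : ℝ) ≤ ∑ i, u i ^ 2 := Finset.sum_nonneg fun i _ => sq_nonneg _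
  linarith

theorem projection_no_worse {n : ℕ} (A : Matrix (Fin n) (Fin n) ℝ)
    (hA : Aᵀ = -A) (hdet : A.det ≠ 0) (b x z ze zo : Fin n → ℝ) (m : ℕ)
    (hx : A *ᵥ x = b) (hzm : z ∈ krylov A b m) (hz : z = ze + zo)
    (hze : ze ∈ krylov (A ^ 2) b ((m + 1) / 2))
    (hzo : zo ∈ krylov (A ^ 2) (A *ᵥ b) (m / 2)) :
    eucNorm (zo - x) ≤ eucNorm (z - x) ∧ eucNorm (b - A *ᵥ zo) ≤ eucNorm (b - A *ᵥ z) := by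
  have geneq : ∀ k : ℕ, ((A ^ 2) ^ k) *ᵥ b = (A ^ (2 * k)) *ᵥ b := by
    intro k; rw [pow_mul]
  have genodd : ∀ l : ℕ, ((A ^ 2) ^ l) *ᵥ (A *ᵥ b) = (A ^ (2 * l + 1)) *ᵥ b := by
    intro l; rw [mulVec_mulVec, ← pow_mul, ← pow_succ]
  -- key orthogonality for the error
  have key1 : ze ⬝ᵥ (zo - x) = 0 := by
    rw [dotProduct_comm]
    refine dot_span_zero ?_ hze
    rintro v ⟨k, -, rfl⟩
    rw [dotProduct_comm]
    show ((A ^ 2) ^ k *ᵥ b) ⬝ᵥ (zo - x) = 0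
    rw [geneq, dotProduct_sub]
    have h1 : ((A ^ (2 * k)) *ᵥ b) ⬝ᵥ zo = 0 := by
      refine dot_span_zero ?_ hzo
      rintro v ⟨l, -, rfl⟩
      show ((A ^ (2 * k)) *ᵥ b) ⬝ᵥ ((A ^ 2) ^ l *ᵥ (A *ᵥ b)) = 0
      rw [genodd]
      exact skew_pow_pow hA ⟨k + l, by ring⟩ b
    have h2 : ((A ^ (2 * k)) *ᵥ b) ⬝ᵥ x = 0 := by
      have hb : (A ^ (2 * k)) *ᵥ b = (A ^ (2 * k + 1)) *ᵥ x := by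
        rw [pow_succ, ← mulVec_mulVec, hx]
      rw [hb]
      exact skew_odd_self hA ⟨k, rfl⟩ x
    rw [h1, h2, sub_zero]
  -- key orthogonality for the residual
  have key2 : (A *ᵥ ze) ⬝ᵥ (b - A *ᵥ zo) = 0 := by
    rw [skew_dot_s18 hA]
    rw [show ze ⬝ᵥ (A *ᵥ (b - A *ᵥ zo)) = 0 from ?_, neg_zero]
    rw [dotProduct_comm]
    refine dot_span_zero ?_ hze
    rintro v ⟨k, -, rfl⟩
    rw [dotProduct_comm]
    show ((A ^ 2) ^ k *ᵥ b) ⬝ᵥ (A *ᵥ (b - A *ᵥ zo)) = 0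
    rw [geneq, mulVec_sub, dotProduct_sub]
    have h1 : ((A ^ (2 * k)) *ᵥ b) ⬝ᵥ (A *ᵥ b) = 0 := by
      have : A *ᵥ b = (A ^ 1) *ᵥ b := by rw [pow_one]
      rw [this]
      exact skew_pow_pow hA ⟨k, by ring⟩ b
    have h2 : ((A ^ (2 * k)) *ᵥ b) ⬝ᵥ (A *ᵥ (A *ᵥ zo)) = 0 := by
      have hAv : A *ᵥ (A *ᵥ zo) = (A ^ 2) *ᵥ zo := by
        rw [pow_two, ← mulVec_mulVec]
      rw [hAv, dotProduct_mulVec, ← mulVec_transpose]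
      have hT : (A ^ 2)ᵀ = A ^ 2 := by
        rw [transpose_pow, hA]; simp [pow_two, neg_mul_neg]
      rw [hT, mulVec_mulVec, ← pow_add]
      refine dot_span_zero ?_ hzo
      rintro v ⟨l, -, rfl⟩
      show ((A ^ (2 + 2 * k)) *ᵥ b) ⬝ᵥ ((A ^ 2) ^ l *ᵥ (A *ᵥ b)) = 0
      rw [genodd]
      exact skew_pow_pow hA ⟨k + l + 1, by ring⟩ b
    rw [h1, h2, sub_zero]
  constructor
  · have hzx : z - x = ze + (zo - x) := by rw [hz]; abel
    rw [hzx]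
    exact enorm_add_left key1
  · have hres : b - A *ᵥ z = (-(A *ᵥ ze)) + (b - A *ᵥ zo) := by
      rw [hz, mulVec_add]; abel
    rw [hres]
    exact enorm_add_left (by rw [neg_dotProduct, key2, neg_zero])
end
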